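/- The curvature K(t) = g''(t)/(1+g'(t)²)^{3/2} of the curve Γ_g satisfies: K(t) = (1/(π√(1−t²))) · (1 + (arccos(t)/π)²)^{−3/2} for every t ∈ (−1,1); K is bounded below on (−1,1) by a positive constant; and K(t) → +∞ as t → −1⁺ and as t → 1⁻. -/

import Mathlib

open Real Set Filter

noncomputable def gfun (t : ℝ) : ℝ := (Real.sqrt (1 - t^2) - t * Real.arccos t) / Real.pi

noncomputable def Kcurv (t : ℝ) : ℝ :=
  deriv (deriv gfun) t / (1 + (deriv gfun t)^2) ^ ((3:ℝ)/2)

lemma one_sub_sq_pos {t : ℝ} (ht : t ∈ Set.Ioo (-1:ℝ) 1) : 0 < 1 - t^2 := by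
  nlinarith [ht.1, ht.2]

lemma hasDerivAt_gfun {t : ℝ} (ht : t ∈ Set.Ioo (-1:ℝ) 1) :
    HasDerivAt gfun (-Real.arccos t / Real.pi) t := by
  have h1 : t ≠ -1 := ne_of_gt ht.1
  have h2 : t ≠ 1 := ne_of_lt ht.2
  have hpos : 0 < 1 - t^2 := one_sub_sq_pos ht
  have hs : Real.sqrt (1 - t^2) ≠ 0 := ne_of_gt (Real.sqrt_pos.mpr hpos)
  have hq : HasDerivAt (fun x : ℝ => 1 - x^2) (-(2*t)) t := by
    simpa using ((hasDerivAt_pow 2 t).const_sub 1)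
  have hsqrt : HasDerivAt (fun x : ℝ => Real.sqrt (1 - x^2))
      (-(2*t) / (2 * Real.sqrt (1 - t^2))) t := hq.sqrt (by positivity)
  have harccos := Real.hasDerivAt_arccos h1 h2
  have hmul : HasDerivAt (fun x : ℝ => x * Real.arccos x)
      (1 * Real.arccos t + t * (-(1 / Real.sqrt (1 - t^2)))) t :=
    (hasDerivAt_id t).mul harccos
  have := ((hsqrt.sub hmul).div_const Real.pi)
  refine HasDerivAt.congr_deriv this ?_
  field_simp
  ring

lemma deriv_gfun_eq {t : ℝ} (ht : t ∈ Set.Ioo (-1:ℝ) 1) :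
    deriv gfun t = -Real.arccos t / Real.pi := (hasDerivAt_gfun ht).deriv

lemma hasDerivAt_deriv_gfun {t : ℝ} (ht : t ∈ Set.Ioo (-1:ℝ) 1) :
    HasDerivAt (deriv gfun) (1 / (Real.pi * Real.sqrt (1 - t^2))) t := by
  have h1 : t ≠ -1 := ne_of_gt ht.1
  have h2 : t ≠ 1 := ne_of_lt ht.2
  have h : HasDerivAt (fun x : ℝ => -Real.arccos x / Real.pi)
      (-(-(1 / Real.sqrt (1 - t^2))) / Real.pi) t :=
    ((Real.hasDerivAt_arccos h1 h2).neg).div_const Real.pi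
  have heq : (fun x : ℝ => -Real.arccos x / Real.pi) =ᶠ[nhds t] deriv gfun := by
    filter_upwards [isOpen_Ioo.mem_nhds ht] with x hx
    exact (deriv_gfun_eq hx).symm
  have := h.congr_of_eventuallyEq heq.symm
  refine HasDerivAt.congr_deriv this ?_
  field_simp

lemma Kcurv_eq {t : ℝ} (ht : t ∈ Set.Ioo (-1:ℝ) 1) :
    Kcurv t = (1 / (Real.pi * Real.sqrt (1 - t^2))) *
      (1 + (Real.arccos t / Real.pi)^2) ^ (-(3:ℝ)/2) := by
  have hA : (0:ℝ) < 1 + (Real.arccos t / Real.pi)^2 := by positivity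
  have hd2 : deriv (deriv gfun) t = 1 / (Real.pi * Real.sqrt (1 - t^2)) :=
    (hasDerivAt_deriv_gfun ht).deriv
  rw [Kcurv, hd2, deriv_gfun_eq ht]
  have h1 : (-Real.arccos t / Real.pi)^2 = (Real.arccos t / Real.pi)^2 := by ring
  rw [h1, show (-(3:ℝ)/2) = -((3:ℝ)/2) by ring, Real.rpow_neg hA.le, div_eq_mul_inv]

theorem curvature_formula_and_blowup :
    (∀ t ∈ Set.Ioo (-1:ℝ) 1,
      Kcurv t = (1 / (Real.pi * Real.sqrt (1 - t^2))) *
        (1 + (Real.arccos t / Real.pi)^2) ^ (-(3:ℝ)/2)) ∧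
    (∃ c : ℝ, 0 < c ∧ ∀ t ∈ Set.Ioo (-1:ℝ) 1, c ≤ Kcurv t) ∧
    Filter.Tendsto Kcurv (nhdsWithin (-1) (Set.Ioo (-1:ℝ) 1)) Filter.atTop ∧
    Filter.Tendsto Kcurv (nhdsWithin 1 (Set.Ioo (-1:ℝ) 1)) Filter.atTop := by
  have key : ∀ t ∈ Set.Ioo (-1:ℝ) 1,
      (2:ℝ) ^ (-(3:ℝ)/2) / Real.pi * (Real.sqrt (1 - t^2))⁻¹ ≤ Kcurv t := by
    intro t ht
    have hpos : 0 < 1 - t^2 := one_sub_sq_pos ht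
    have hs : 0 < Real.sqrt (1 - t^2) := Real.sqrt_pos.mpr hpos
    have hA : (0:ℝ) < 1 + (Real.arccos t / Real.pi)^2 := by positivity
    have hA2 : 1 + (Real.arccos t / Real.pi)^2 ≤ 2 := by
      have h1 : Real.arccos t ≤ Real.pi := Real.arccos_le_pi t
      have h2 : 0 ≤ Real.arccos t := Real.arccos_nonneg t
      have h3 : Real.arccos t / Real.pi ≤ 1 := (div_le_one Real.pi_pos).mpr h1
      nlinarith [div_nonneg h2 Real.pi_pos.le]
    have hrpow : (2:ℝ) ^ (-(3:ℝ)/2) ≤ (1 + (Real.arccos t / Real.pi)^2) ^ (-(3:ℝ)/2) :=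
      Real.rpow_le_rpow_of_nonpos hA hA2 (by norm_num)
    rw [Kcurv_eq ht]
    have e : (2:ℝ) ^ (-(3:ℝ)/2) / Real.pi * (Real.sqrt (1 - t^2))⁻¹ =
        (1 / (Real.pi * Real.sqrt (1 - t^2))) * (2:ℝ) ^ (-(3:ℝ)/2) := by
      field_simp
    rw [e]
    exact mul_le_mul_of_nonneg_left hrpow (by positivity)
  have hblow : ∀ a : ℝ, a = -1 ∨ a = 1 →
      Filter.Tendsto Kcurv (nhdsWithin a (Set.Ioo (-1:ℝ) 1)) Filter.atTop := by
    intro a ha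
    have h0 : Real.sqrt (1 - a^2) = 0 := by
      rcases ha with h | h <;> rw [h] <;> norm_num
    have hcont : Filter.Tendsto (fun t : ℝ => Real.sqrt (1 - t^2))
        (nhdsWithin a (Set.Ioo (-1:ℝ) 1)) (nhds 0) := by
      have : Continuous (fun t : ℝ => Real.sqrt (1 - t^2)) := by continuity
      have h2 := (this.tendsto a).mono_left
        (nhdsWithin_le_nhds (s := Set.Ioo (-1:ℝ) 1))
      rwa [h0] at h2
    have hpos : Filter.Tendsto (fun t : ℝ => Real.sqrt (1 - t^2))
        (nhdsWithin a (Set.Ioo (-1:ℝ) 1)) (nhdsWithin 0 (Set.Ioi 0)) := by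
      rw [tendsto_nhdsWithin_iff]
      refine ⟨hcont, ?_⟩
      filter_upwards [self_mem_nhdsWithin] with t ht
      exact Real.sqrt_pos.mpr (one_sub_sq_pos ht)
    have hinv : Filter.Tendsto (fun t : ℝ => (Real.sqrt (1 - t^2))⁻¹)
        (nhdsWithin a (Set.Ioo (-1:ℝ) 1)) Filter.atTop := hpos.inv_tendsto_nhdsGT_zero
    have hc : (0:ℝ) < (2:ℝ) ^ (-(3:ℝ)/2) / Real.pi := by positivity
    have hL : Filter.Tendsto (fun t : ℝ =>
        (2:ℝ) ^ (-(3:ℝ)/2) / Real.pi * (Real.sqrt (1 - t^2))⁻¹)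
        (nhdsWithin a (Set.Ioo (-1:ℝ) 1)) Filter.atTop := hinv.const_mul_atTop hc
    refine tendsto_atTop_mono' _ ?_ hL
    filter_upwards [self_mem_nhdsWithin] with t ht
    exact key t ht
  refine ⟨fun t ht => Kcurv_eq ht, ?_, hblow (-1) (Or.inl rfl), hblow 1 (Or.inr rfl)⟩
  refine ⟨(2:ℝ) ^ (-(3:ℝ)/2) / Real.pi, by positivity, ?_⟩
  intro t ht
  refine le_trans ?_ (key t ht)
  have hpos : 0 < 1 - t^2 := one_sub_sq_pos ht
  have hs : 0 < Real.sqrt (1 - t^2) := Real.sqrt_pos.mpr hpos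
  have hle : Real.sqrt (1 - t^2) ≤ 1 := by
    calc Real.sqrt (1 - t^2) ≤ Real.sqrt 1 := Real.sqrt_le_sqrt (by nlinarith [ht.1, ht.2])
      _ = 1 := Real.sqrt_one
  have hinv : (1:ℝ) ≤ (Real.sqrt (1 - t^2))⁻¹ := (one_le_inv₀ hs).mpr hle
  nlinarith [Real.rpow_pos_of_pos (by norm_num : (0:ℝ) < 2) (-(3:ℝ)/2), Real.pi_pos,
    mul_le_mul_of_nonneg_left hinv (le_of_lt (div_pos (Real.rpow_pos_of_pos (by norm_num : (0:ℝ) < 2) (-(3:ℝ)/2)) Real.pi_pos))]
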